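/- Let φ be a solution of the normalized equation EQ_λ on (0,∞). Then for every t₀ > 0, φ is bounded on [t₀,∞), i.e., there exists a constant C such that |φ(t)| ≤ C for all t ≥ t₀. -/

import Mathlib

open Real Set

lemma myHasDerivAt_abs_rpow {q : ℝ} (hq : 1 < q) (a : ℝ) :
    HasDerivAt (fun x : ℝ => |x| ^ (q + 1)) ((q + 1) * (|a| ^ (q - 1) * a)) a := by
  have h := hasDerivAt_abs_rpow a (p := q + 1) (by linarith)
  convert h using 1
  rw [show q + 1 - 2 = q - 1 by ring]
  ring

/-- Any solution φ of the normalized equation EQ_λ on (0,∞) is bounded on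
each ray [t₀,∞) with t₀ > 0. -/
theorem solution_bounded
    (n : ℕ) (hn : 2 ≤ n) (lam q : ℝ) (hlam : 0 < lam) (hq : 1 < q)
    (φ φ' φ'' : ℝ → ℝ)
    (hd1 : ∀ t ∈ Ioi (0:ℝ), HasDerivAt φ (φ' t) t)
    (hd2 : ∀ t ∈ Ioi (0:ℝ), HasDerivAt φ' (φ'' t) t)
    (hode : ∀ t ∈ Ioi (0:ℝ),
      φ'' t + ((n : ℝ) - 1) * ((exp (2*t) + 1) / (exp (2*t) - 1)) * φ' t
        = lam * (φ t - |φ t| ^ (q - 1) * φ t)) :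
    ∀ t₀ : ℝ, 0 < t₀ → ∃ C : ℝ, ∀ t : ℝ, t₀ ≤ t → |φ t| ≤ C := by
  intro t₀ ht₀
  set E : ℝ → ℝ := fun t =>
    (1/2) * (φ' t)^2 + lam * (|φ t| ^ (q + 1) / (q + 1) - (φ t)^2 / 2) with hEdef
  have hq1 : (q : ℝ) + 1 ≠ 0 := by linarith
  -- derivative of E
  have hE : ∀ t ∈ Ioi (0:ℝ), HasDerivAt E
      (-(((n : ℝ) - 1) * ((exp (2*t) + 1) / (exp (2*t) - 1)) * (φ' t)^2)) t := by
    intro t ht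
    have h1 := ((hd2 t ht).pow 2).const_mul (1/2 : ℝ)
    have habs := (myHasDerivAt_abs_rpow hq (φ t)).comp t (hd1 t ht)
    have h2 := ((habs.div_const (q+1)).sub (((hd1 t ht).pow 2).div_const 2)).const_mul lam
    have h3 := h1.add h2
    refine h3.congr_deriv (Eq.symm ?_)
    have hx : (q+1) * (|φ t| ^ (q-1) * φ t) * φ' t / (q+1)
        = |φ t| ^ (q-1) * φ t * φ' t := by
      field_simp
    rw [hx]
    linear_combination (-(φ' t)) * hode t ht
  -- antitone
  have hIci : Ici t₀ ⊆ Ioi (0:ℝ) := fun x hx => lt_of_lt_of_le ht₀ hx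
  have hcont : ContinuousOn E (Ici t₀) := fun x hx =>
    ((hE x (hIci hx)).differentiableAt.continuousAt).continuousWithinAt
  have hdiff : DifferentiableOn ℝ E (interior (Ici t₀)) := by
    intro x hx
    rw [interior_Ici] at hx
    exact ((hE x (lt_trans ht₀ hx)).differentiableAt).differentiableWithinAt
  have hderiv : ∀ x ∈ interior (Ici t₀), deriv E x ≤ 0 := by
    intro x hx
    rw [interior_Ici] at hx
    have hx0 : x ∈ Ioi (0:ℝ) := lt_trans ht₀ hx
    rw [(hE x hx0).deriv]
    have hc : 0 ≤ ((n : ℝ) - 1) * ((exp (2*x) + 1) / (exp (2*x) - 1)) := by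
      apply mul_nonneg
      · have : (2:ℝ) ≤ (n:ℝ) := by exact_mod_cast hn
        linarith
      · apply div_nonneg
        · positivity
        · have : (1:ℝ) < exp (2*x) := by
            rw [← Real.exp_zero]
            exact Real.exp_lt_exp.mpr (by linarith [mem_Ioi.mp hx0])
          linarith
    have := sq_nonneg (φ' x)
    nlinarith
  have hanti : AntitoneOn E (Ici t₀) :=
    antitoneOn_of_deriv_nonpos (convex_Ici t₀) hcont hdiff hderiv
  -- bound
  set B : ℝ := E t₀ / lam with hBdef
  refine ⟨max ((q+1) ^ ((1:ℝ)/(q-1))) (Real.sqrt (2 * max B 0)), ?_⟩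
  intro t ht
  have hEt : E t ≤ E t₀ := hanti (self_mem_Ici) ht ht
  have hEt' : (1/2) * (φ' t)^2 + lam * (|φ t| ^ (q + 1) / (q + 1) - (φ t)^2 / 2) ≤ E t₀ := hEt
  set x := |φ t| with hxdef
  have hx0 : 0 ≤ x := abs_nonneg _
  have hsq : (φ t)^2 = x^2 := (sq_abs (φ t)).symm
  have hg : x ^ (q+1) / (q+1) - x^2 / 2 ≤ B := by
    rw [hBdef, le_div_iff₀ hlam]
    nlinarith [sq_nonneg (φ' t), hEt']
  by_cases hxK : x ≤ (q+1) ^ ((1:ℝ)/(q-1))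
  · exact le_max_of_le_left hxK
  · push_neg at hxK
    set K := (q+1) ^ ((1:ℝ)/(q-1)) with hKdef
    have hKpos : 0 < K := Real.rpow_pos_of_pos (by linarith) _
    have hxpos : 0 < x := lt_trans hKpos hxK
    have hKq : K ^ (q-1) = q + 1 := by
      rw [hKdef, ← Real.rpow_mul (by linarith : (0:ℝ) ≤ q+1), one_div,
        inv_mul_cancel₀ (by linarith : q - 1 ≠ 0), Real.rpow_one]
    have hxq : q + 1 ≤ x ^ (q-1) := hKq ▸ Real.rpow_le_rpow hKpos.le hxK.le (by linarith)
    have hsplit : x ^ (q+1) = x ^ (q-1) * x^2 := by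
      rw [show q+1 = (q-1) + 2 by ring, Real.rpow_add hxpos, ← Real.rpow_natCast x 2]
      norm_num
    have hge : (q+1) * x^2 ≤ x^(q+1) := by
      rw [hsplit]; exact mul_le_mul_of_nonneg_right hxq (sq_nonneg x)
    have hdiv : x^2 ≤ x^(q+1)/(q+1) := (le_div_iff₀ (by linarith)).mpr (by linarith)
    have hx2 : x^2 ≤ 2 * max B 0 := by
      have := le_max_left B 0
      nlinarith
    exact le_max_of_le_right ((Real.le_sqrt hx0 (by positivity)).mpr hx2)
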